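/- arXiv:2508.05559 — 2 statements merged into one kernel-verified Lean document; each statement's English description precedes it below -/
import Mathlib

section
/- Evenness of the two-qubit pulse-based model output with initial state |00⟩. Let K ∈ ℕ, Δt > 0 and piecewise-constant controls Θ = ((θ₁^{(1)},θ₂^{(1)}),…,(θ₁^{(K)},θ₂^{(K)})) ∈ (ℝ²)^K be given. For x ∈ ℝ define ψ_0(x) = |0⟩⊗|0⟩ and ψ_k(x) = exp(−iΔt(x·σz⊗σz + θ₁^{(k)}·σx⊗I₂ + θ₂^{(k)}·I₂⊗σx)) ψ_{k−1}(x), and set f(x,Θ) = ⟨ψ_K(x), (σz⊗σz) ψ_K(x)⟩. Then f(−x,Θ) = f(x,Θ) for all x ∈ ℝ; i.e., the model with initial state |00⟩ and observable σz⊗σz realizes only even functions of x. -/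
open Matrix Kronecker

/-- The Pauli matrix `σx`. -/
noncomputable def σx : Matrix (Fin 2) (Fin 2) ℂ := !![0, 1; 1, 0]

/-- The Pauli matrix `σy`. -/
noncomputable def σy : Matrix (Fin 2) (Fin 2) ℂ := !![0, -Complex.I; Complex.I, 0]

/-- The Pauli matrix `σz`. -/
noncomputable def σz : Matrix (Fin 2) (Fin 2) ℂ := !![1, 0; 0, -1]

/-- The 2×2 identity matrix. -/
noncomputable def I₂ : Matrix (Fin 2) (Fin 2) ℂ := 1

lemma σz_mul_σz : σz * σz = 1 := by
  ext i j; fin_cases i <;> fin_cases j <;> simp [σz, Matrix.mul_apply, Fin.sum_univ_two]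

lemma σz_σx_σz : σz * σx * σz = -σx := by
  ext i j; fin_cases i <;> fin_cases j <;> simp [σz, σx, Matrix.mul_apply, Fin.sum_univ_two]

lemma S_mul_S : (σz ⊗ₖ σz) * (σz ⊗ₖ σz) = (1 : Matrix (Fin 2 × Fin 2) (Fin 2 × Fin 2) ℂ) := by
  rw [← Matrix.mul_kronecker_mul, σz_mul_σz, Matrix.one_kronecker_one]

lemma S_conj : ((σz ⊗ₖ σz)ᴴᵀ : Matrix (Fin 2 × Fin 2) (Fin 2 × Fin 2) ℂ) = σz ⊗ₖ σz := by
  ext ⟨i,j⟩ ⟨k,l⟩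
  fin_cases i <;> fin_cases j <;> fin_cases k <;> fin_cases l <;>
    simp [σz, Matrix.kroneckerMap_apply, Matrix.conjTranspose_apply, Matrix.transpose_apply]

lemma X1_conj : ((σx ⊗ₖ I₂)ᴴᵀ : Matrix (Fin 2 × Fin 2) (Fin 2 × Fin 2) ℂ) = σx ⊗ₖ I₂ := by
  ext ⟨i,j⟩ ⟨k,l⟩
  fin_cases i <;> fin_cases j <;> fin_cases k <;> fin_cases l <;>
    simp [σx, I₂, Matrix.kroneckerMap_apply, Matrix.conjTranspose_apply, Matrix.transpose_apply,
      Matrix.one_apply]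

lemma X2_conj : ((I₂ ⊗ₖ σx)ᴴᵀ : Matrix (Fin 2 × Fin 2) (Fin 2 × Fin 2) ℂ) = I₂ ⊗ₖ σx := by
  ext ⟨i,j⟩ ⟨k,l⟩
  fin_cases i <;> fin_cases j <;> fin_cases k <;> fin_cases l <;>
    simp [σx, I₂, Matrix.kroneckerMap_apply, Matrix.conjTranspose_apply, Matrix.transpose_apply,
      Matrix.one_apply]

lemma S_X1_S : (σz ⊗ₖ σz) * (σx ⊗ₖ I₂) * (σz ⊗ₖ σz) = -(σx ⊗ₖ I₂) := by
  rw [← Matrix.mul_kronecker_mul, ← Matrix.mul_kronecker_mul, σz_σx_σz]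
  have h1 : σz * I₂ * σz = I₂ := by rw [show σz * I₂ = σz from Matrix.mul_one σz, σz_mul_σz]; rfl
  rw [h1]
  ext a b; simp [Matrix.kroneckerMap_apply]

lemma S_X2_S : (σz ⊗ₖ σz) * (I₂ ⊗ₖ σx) * (σz ⊗ₖ σz) = -(I₂ ⊗ₖ σx) := by
  rw [← Matrix.mul_kronecker_mul, ← Matrix.mul_kronecker_mul, σz_σx_σz]
  have h1 : σz * I₂ * σz = I₂ := by rw [show σz * I₂ = σz from Matrix.mul_one σz, σz_mul_σz]; rfl
  rw [h1]
  ext a b; simp [Matrix.kroneckerMap_apply]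

-- conjugation commutes with mulVec on starred vectors
lemma conj_mulVec (M : Matrix (Fin 2 × Fin 2) (Fin 2 × Fin 2) ℂ) (v : Fin 2 × Fin 2 → ℂ) :
    (Mᴴᵀ).mulVec (star v) = star (M.mulVec v) := by
  ext i
  simp [Matrix.mulVec, dotProduct, Matrix.conjTranspose_apply, Matrix.transpose_apply,
    Pi.star_apply, star_sum, mul_comm]

lemma conjH (Δt x a b : ℝ) :
    (σz ⊗ₖ σz) * ((-(Δt:ℂ) * Complex.I) •
        ((x:ℂ) • (σz ⊗ₖ σz) + (a:ℂ) • (σx ⊗ₖ I₂) + (b:ℂ) • (I₂ ⊗ₖ σx)))ᴴᵀ * (σz ⊗ₖ σz)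
      = (-(Δt:ℂ) * Complex.I) •
        ((((-x : ℝ)):ℂ) • (σz ⊗ₖ σz) + (a:ℂ) • (σx ⊗ₖ I₂) + (b:ℂ) • (I₂ ⊗ₖ σx)) := by
  have hc : (starRingEnd ℂ) (-(Δt:ℂ) * Complex.I) = -(-(Δt:ℂ) * Complex.I) := by
    simp [Complex.conj_I]
  have hS3 : (σz ⊗ₖ σz) * (σz ⊗ₖ σz) * (σz ⊗ₖ σz) = σz ⊗ₖ σz := by
    rw [S_mul_S, one_mul]
  simp only [Matrix.conjTranspose_smul, Matrix.transpose_smul, Matrix.conjTranspose_add,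
    Matrix.transpose_add, S_conj, X1_conj, X2_conj, Complex.star_def, hc, Complex.conj_ofReal,
    Matrix.mul_smul, Matrix.smul_mul, Matrix.mul_add, Matrix.add_mul]
  rw [hS3, S_X1_S, S_X2_S]
  push_cast
  module

lemma exp_A_neg (Δt x a b : ℝ) :
    NormedSpace.exp ((-(Δt:ℂ) * Complex.I) •
        ((((-x : ℝ)):ℂ) • (σz ⊗ₖ σz) + (a:ℂ) • (σx ⊗ₖ I₂) + (b:ℂ) • (I₂ ⊗ₖ σx)))
      = (σz ⊗ₖ σz) * (NormedSpace.exp ((-(Δt:ℂ) * Complex.I) •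
        ((x:ℂ) • (σz ⊗ₖ σz) + (a:ℂ) • (σx ⊗ₖ I₂) + (b:ℂ) • (I₂ ⊗ₖ σx))))ᴴᵀ * (σz ⊗ₖ σz) := by
  have hinv : (σz ⊗ₖ σz)⁻¹ = σz ⊗ₖ σz := Matrix.inv_eq_right_inv S_mul_S
  have hu : IsUnit (σz ⊗ₖ σz) := @isUnit_of_invertible _ _ _ (invertibleOfRightInverse _ _ S_mul_S)
  rw [← conjH Δt x a b]
  have h := Matrix.exp_conj (σz ⊗ₖ σz)
    (((-(Δt:ℂ) * Complex.I) •
        ((x:ℂ) • (σz ⊗ₖ σz) + (a:ℂ) • (σx ⊗ₖ I₂) + (b:ℂ) • (I₂ ⊗ₖ σx)))ᴴᵀ) hu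
  rw [hinv] at h
  rw [h, Matrix.exp_transpose, Matrix.exp_conjTranspose]

/-- The state sequence of the two-qubit pulse-based model with initial state `|00⟩`:
`ψ_{k+1} = exp(−iΔt(x·σz⊗σz + θ₁^{(k)}·σx⊗I₂ + θ₂^{(k)}·I₂⊗σx)) ψ_k`. -/
noncomputable def psi (K : ℕ) (Δt : ℝ) (Θ : Fin K → ℝ × ℝ) (x : ℝ) :
    ℕ → (Fin 2 × Fin 2 → ℂ)
  | 0 => fun a => if a = (0, 0) then 1 else 0
  | k + 1 =>
      if h : k < K then
        (NormedSpace.exp ((-(Δt : ℂ) * Complex.I) •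
            ((x : ℂ) • (σz ⊗ₖ σz) + ((Θ ⟨k, h⟩).1 : ℂ) • (σx ⊗ₖ I₂) +
              ((Θ ⟨k, h⟩).2 : ℂ) • (I₂ ⊗ₖ σx)))).mulVec (psi K Δt Θ x k)
      else psi K Δt Θ x k

/-- The model output `f(x,Θ) = ⟨ψ_K(x), (σz⊗σz) ψ_K(x)⟩`. -/
noncomputable def f (K : ℕ) (Δt : ℝ) (Θ : Fin K → ℝ × ℝ) (x : ℝ) : ℝ :=
  (star (psi K Δt Θ x K) ⬝ᵥ (σz ⊗ₖ σz).mulVec (psi K Δt Θ x K)).re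

lemma psi_neg (K : ℕ) (Δt : ℝ) (Θ : Fin K → ℝ × ℝ) (x : ℝ) :
    ∀ k, psi K Δt Θ (-x) k = (σz ⊗ₖ σz).mulVec (star (psi K Δt Θ x k)) := by
  intro k
  induction k with
  | zero =>
      ext ⟨i, j⟩
      fin_cases i <;> fin_cases j <;>
        simp [psi, Matrix.mulVec, dotProduct, Fintype.sum_prod_type, Fin.sum_univ_two,
          σz, Matrix.kroneckerMap_apply, Prod.ext_iff]
  | succ k ih =>
      rw [psi, psi]
      split_ifs with h
      · rw [ih, exp_A_neg, ← conj_mulVec]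
        rw [Matrix.mulVec_mulVec, Matrix.mulVec_mulVec]
        rw [mul_assoc, mul_assoc, S_mul_S, mul_one]
      · exact ih

/-- **Evenness of the two-qubit pulse-based model output with initial state `|00⟩`**:
`f(−x,Θ) = f(x,Θ)` for all `x ∈ ℝ`; the model realizes only even functions of `x`. -/
theorem model_output_even (K : ℕ) (Δt : ℝ) (hΔt : 0 < Δt) (Θ : Fin K → ℝ × ℝ) (x : ℝ) :
    f K Δt Θ (-x) = f K Δt Θ x := by
  unfold f
  rw [psi_neg]
  set ψ := psi K Δt Θ x K with hψ
  have h1 : star ((σz ⊗ₖ σz).mulVec (star ψ)) = (σz ⊗ₖ σz).mulVec ψ := by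
    conv_lhs => rw [← S_conj, conj_mulVec, star_star]
  have h2 : (σz ⊗ₖ σz).mulVec ((σz ⊗ₖ σz).mulVec (star ψ)) = star ψ := by
    rw [Matrix.mulVec_mulVec, S_mul_S, Matrix.one_mulVec]
  rw [h1, h2, dotProduct_comm]
end

section
/- Dynamical Lie algebra of the non-interacting n-qubit model (Model 2). For n ≥ 1, the real Lie subalgebra of 2^n×2^n complex matrices generated by the set {i·Σ_{k=1}^n σz^{(k)}} ∪ {i·σx^{(k)} : 1≤k≤n} ∪ {i·σy^{(k)} : 1≤k≤n} equals the real span of {i·σx^{(k)}, i·σy^{(k)}, i·σz^{(k)} : 1≤k≤n}, and has dimension 3n as a real vector space (it is a direct sum of n commuting copies of su(2)). -/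
open Matrix

/-- `σα^{(k)}`: the single-site operator `I₂^{⊗k} ⊗ σα ⊗ I₂^{⊗(n−k−1)}` on an `n`-qubit
register (sites indexed from `0`), realized as a `2^n × 2^n` matrix indexed by
`Fin n → Fin 2`. -/
noncomputable def pauliAt (n : ℕ) (k : ℕ) (σ : Matrix (Fin 2) (Fin 2) ℂ) :
    Matrix (Fin n → Fin 2) (Fin n → Fin 2) ℂ :=
  Matrix.of fun a b => ∏ t : Fin n, (if (t : ℕ) = k then σ else 1) (a t) (b t)

attribute [local instance 100] LieRing.ofAssociativeRing

lemma kron_mul {n : ℕ} (M N : Fin n → Matrix (Fin 2) (Fin 2) ℂ) :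
    (Matrix.of fun a b : Fin n → Fin 2 => ∏ t, M t (a t) (b t)) *
      (Matrix.of fun a b : Fin n → Fin 2 => ∏ t, N t (a t) (b t)) =
      Matrix.of fun a b : Fin n → Fin 2 => ∏ t, (M t * N t) (a t) (b t) := by
  ext a b
  simp only [Matrix.mul_apply, Matrix.of_apply]
  rw [Finset.prod_univ_sum, Fintype.piFinset_univ]
  exact Finset.sum_congr rfl fun c _ => (Finset.prod_mul_distrib).symm

lemma pauliAt_coe {n : ℕ} (k : Fin n) (σ : Matrix (Fin 2) (Fin 2) ℂ) :
    pauliAt n k σ = Matrix.of fun a b : Fin n → Fin 2 =>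
      ∏ t, (if t = k then σ else 1) (a t) (b t) := by
  unfold pauliAt
  congr 1
  ext a b
  refine Finset.prod_congr rfl fun t _ => ?_
  by_cases h : t = k
  · simp [h]
  · rw [if_neg (fun hh => h (Fin.val_injective hh)), if_neg h]

lemma pauliAt_mul_same {n : ℕ} (k : Fin n) (σ τ : Matrix (Fin 2) (Fin 2) ℂ) :
    pauliAt n k σ * pauliAt n k τ = pauliAt n k (σ * τ) := by
  rw [pauliAt_coe, pauliAt_coe, pauliAt_coe, kron_mul]
  congr 1
  ext a b
  refine Finset.prod_congr rfl fun t _ => ?_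
  by_cases h : t = k <;> simp [h]

lemma pauliAt_mul_comm {n : ℕ} (k l : Fin n) (h : k ≠ l) (σ τ : Matrix (Fin 2) (Fin 2) ℂ) :
    pauliAt n k σ * pauliAt n l τ = pauliAt n l τ * pauliAt n k σ := by
  rw [pauliAt_coe, pauliAt_coe, kron_mul, kron_mul]
  congr 1
  ext a b
  refine Finset.prod_congr rfl fun t _ => ?_
  by_cases h1 : t = k
  · subst h1; rw [if_neg h]; simp
  · by_cases h2 : t = l
    · subst h2; rw [if_neg (Ne.symm h)]; simp
    · simp [h1, h2]

lemma pauliAt_apply {n : ℕ} (k : Fin n) (σ : Matrix (Fin 2) (Fin 2) ℂ)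
    (a b : Fin n → Fin 2) :
    pauliAt n k σ a b =
      σ (a k) (b k) * ∏ t ∈ Finset.univ.erase k, (1 : Matrix (Fin 2) (Fin 2) ℂ) (a t) (b t) := by
  rw [pauliAt_coe]
  rw [Matrix.of_apply, ← Finset.mul_prod_erase Finset.univ _ (Finset.mem_univ k), if_pos rfl]
  congr 1
  exact Finset.prod_congr rfl fun t ht => by rw [if_neg (Finset.ne_of_mem_erase ht)]

lemma pauliAt_lin {n : ℕ} (k : Fin n) (c d : ℂ) (σ τ : Matrix (Fin 2) (Fin 2) ℂ) :
    pauliAt n k (c • σ + d • τ) = c • pauliAt n k σ + d • pauliAt n k τ := by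
  ext a b
  simp only [Matrix.add_apply, Matrix.smul_apply, pauliAt_apply, smul_eq_mul]
  ring

lemma hxy : σx * σy = Complex.I • σz := by
  ext i j; fin_cases i <;> fin_cases j <;>
    simp [σx, σy, σz, Matrix.mul_apply, Fin.sum_univ_two]

lemma hyx : σy * σx = (-Complex.I) • σz := by
  ext i j; fin_cases i <;> fin_cases j <;>
    simp [σx, σy, σz, Matrix.mul_apply, Fin.sum_univ_two]

lemma hyz : σy * σz = Complex.I • σx := by
  ext i j; fin_cases i <;> fin_cases j <;>
    simp [σx, σy, σz, Matrix.mul_apply, Fin.sum_univ_two]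

lemma hzy : σz * σy = (-Complex.I) • σx := by
  ext i j; fin_cases i <;> fin_cases j <;>
    simp [σx, σy, σz, Matrix.mul_apply, Fin.sum_univ_two]

lemma hzx : σz * σx = Complex.I • σy := by
  ext i j; fin_cases i <;> fin_cases j <;>
    simp [σx, σy, σz, Matrix.mul_apply, Fin.sum_univ_two]

lemma hxz : σx * σz = (-Complex.I) • σy := by
  ext i j; fin_cases i <;> fin_cases j <;>
    simp [σx, σy, σz, Matrix.mul_apply, Fin.sum_univ_two]

lemma pauliAt_smul {n : ℕ} (k : Fin n) (c : ℂ) (σ : Matrix (Fin 2) (Fin 2) ℂ) :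
    pauliAt n k (c • σ) = c • pauliAt n k σ := by
  ext a b
  simp only [Matrix.smul_apply, pauliAt_apply, smul_eq_mul]
  ring

lemma bracket_pauli {n : ℕ} (k : Fin n) (α β γ : Matrix (Fin 2) (Fin 2) ℂ)
    (h1 : α * β = Complex.I • γ) (h2 : β * α = (-Complex.I) • γ) :
    ⁅Complex.I • pauliAt n k α, Complex.I • pauliAt n k β⁆
      = (-2 : ℝ) • (Complex.I • pauliAt n k γ) := by
  rw [Ring.lie_def, smul_mul_assoc, smul_mul_assoc, mul_smul_comm, mul_smul_comm,
      pauliAt_mul_same, pauliAt_mul_same, h1, h2, pauliAt_smul, pauliAt_smul,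
      smul_smul, smul_smul, smul_smul, smul_smul, ← sub_smul, ← smul_assoc]
  congr 1
  simp [Complex.ext_iff]
  norm_num

lemma bracket_pauli_ne {n : ℕ} (k l : Fin n) (h : k ≠ l) (α β : Matrix (Fin 2) (Fin 2) ℂ) :
    ⁅Complex.I • pauliAt n k α, Complex.I • pauliAt n l β⁆ = 0 := by
  rw [Ring.lie_def, smul_mul_assoc, smul_mul_assoc, mul_smul_comm, mul_smul_comm,
      pauliAt_mul_comm k l h]
  simp

lemma pauliAt_diag {n : ℕ} (k : Fin n) (σ : Matrix (Fin 2) (Fin 2) ℂ) (c : Fin n → Fin 2) :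
    pauliAt n k σ c c = σ (c k) (c k) := by
  rw [pauliAt_apply]
  simp [Matrix.one_apply]

lemma pauliAt_offdiag {n : ℕ} (k l : Fin n) (σ : Matrix (Fin 2) (Fin 2) ℂ) :
    pauliAt n l σ (fun _ => 0) (Function.update (fun _ => (0 : Fin 2)) k 1) =
      if l = k then σ 0 1 else 0 := by
  rw [pauliAt_apply]
  by_cases h : l = k
  · subst h
    rw [if_pos rfl, Function.update_self]
    rw [Finset.prod_congr rfl fun t ht =>
      show (1 : Matrix (Fin 2) (Fin 2) ℂ) 0 (Function.update (fun _ => (0:Fin 2)) l 1 t) = 1 by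
        rw [Function.update_of_ne (Finset.ne_of_mem_erase ht)]; simp [Matrix.one_apply]]
    simp
  · rw [if_neg h]
    apply mul_eq_zero_of_right
    apply Finset.prod_eq_zero (Finset.mem_erase.2 ⟨Ne.symm h, Finset.mem_univ k⟩)
    rw [Function.update_self]
    simp [Matrix.one_apply]

lemma sigma_diag_x : ∀ i : Fin 2, σx i i = 0 := by intro i; fin_cases i <;> simp [σx]
lemma sigma_diag_y : ∀ i : Fin 2, σy i i = 0 := by intro i; fin_cases i <;> simp [σy]

lemma pauli_indep (n : ℕ) :
    LinearIndependent ℝ (Sum.elim (Sum.elim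
      (fun k : Fin n => Complex.I • pauliAt n k σx)
      (fun k : Fin n => Complex.I • pauliAt n k σy))
      (fun k : Fin n => Complex.I • pauliAt n k σz)) := by
  rw [Fintype.linearIndependent_iff]
  intro g hg
  have key : ∀ (a b : Fin n → Fin 2),
      (∑ l, g (.inl (.inl l)) • (Complex.I * pauliAt n l σx a b)) +
      ((∑ l, g (.inl (.inr l)) • (Complex.I * pauliAt n l σy a b)) +
      (∑ l, g (.inr l) • (Complex.I * pauliAt n l σz a b))) = 0 := by
    intro a b
    have h := congrArg (fun M : Matrix (Fin n → Fin 2) (Fin n → Fin 2) ℂ => M a b) hg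
    simpa [Matrix.sum_apply, Fintype.sum_sum_type, add_assoc] using h
  have hxy0 : ∀ k : Fin n, g (.inl (.inl k)) = 0 ∧ g (.inl (.inr k)) = 0 := by
    intro k
    have h1 := key (fun _ => 0) (Function.update (fun _ => (0:Fin 2)) k 1)
    simp only [pauliAt_offdiag, Complex.real_smul, mul_ite, mul_zero, mul_one,
      Finset.sum_ite_eq', Finset.mem_univ, if_true, σx, σy, σz,
      Matrix.cons_val_zero, Matrix.cons_val_one, Matrix.head_cons,
      Finset.sum_const_zero, add_zero] at h1
    have h2 := congrArg Complex.re h1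
    have h3 := congrArg Complex.im h1
    simp at h2 h3
    exact ⟨h3, h2⟩
  have hz0 : ∀ k : Fin n, g (.inr k) = 0 := by
    intro k
    have ha := key (fun _ => 0) (fun _ => 0)
    have hb := key (Function.update (fun _ => (0:Fin 2)) k 1)
      (Function.update (fun _ => (0:Fin 2)) k 1)
    have hub : ∀ l : Fin n, σz (Function.update (fun _ => (0:Fin 2)) k 1 l)
        (Function.update (fun _ => (0:Fin 2)) k 1 l) = if l = k then -1 else 1 := by
      intro l; by_cases h : l = k <;> simp [Function.update_apply, h, σz]
    have hz00 : σz 0 0 = 1 := by simp [σz]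
    simp only [pauliAt_diag, sigma_diag_x, sigma_diag_y, mul_zero, smul_zero,
      Finset.sum_const_zero, zero_add, hub, hz00, Complex.real_smul, mul_one] at ha hb
    rw [← Finset.add_sum_erase _ _ (Finset.mem_univ k)] at ha hb
    rw [if_pos rfl] at hb
    rw [Finset.sum_congr rfl (fun l hl => by rw [if_neg (Finset.ne_of_mem_erase hl)])] at hb
    simp only [mul_one] at hb
    have hc : (↑(g (Sum.inr k)) : ℂ) * Complex.I = 0 := by linear_combination (ha - hb) / 2
    have := congrArg Complex.im hc
    simpa using this
  intro i
  rcases i with (k | k) | k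
  · exact (hxy0 k).1
  · exact (hxy0 k).2
  · exact hz0 k


/-- **Dynamical Lie algebra of the non-interacting `n`-qubit model (Model 2)**: the real Lie
algebra generated by `{i·Σ_k σz^{(k)}} ∪ {i·σx^{(k)}} ∪ {i·σy^{(k)}}` equals the real span of
`{i·σx^{(k)}, i·σy^{(k)}, i·σz^{(k)} : k}` and has real dimension `3n` (a direct sum of `n`
commuting copies of `su(2)`). -/
theorem dla_noninteracting_model (n : ℕ) (hn : 1 ≤ n) :
    (LieSubalgebra.lieSpan ℝ (Matrix (Fin n → Fin 2) (Fin n → Fin 2) ℂ)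
        ({Complex.I • ∑ k : Fin n, pauliAt n k σz} ∪
          Set.range (fun k : Fin n => Complex.I • pauliAt n k σx) ∪
          Set.range (fun k : Fin n => Complex.I • pauliAt n k σy))).toSubmodule =
      Submodule.span ℝ
        (Set.range (fun k : Fin n => Complex.I • pauliAt n k σx) ∪
          Set.range (fun k : Fin n => Complex.I • pauliAt n k σy) ∪
          Set.range (fun k : Fin n => Complex.I • pauliAt n k σz)) ∧
    Module.finrank ℝ
      (LieSubalgebra.lieSpan ℝ (Matrix (Fin n → Fin 2) (Fin n → Fin 2) ℂ)
        ({Complex.I • ∑ k : Fin n, pauliAt n k σz} ∪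
          Set.range (fun k : Fin n => Complex.I • pauliAt n k σx) ∪
          Set.range (fun k : Fin n => Complex.I • pauliAt n k σy))) = 3 * n := by
  classical
  set M := Matrix (Fin n → Fin 2) (Fin n → Fin 2) ℂ
  set X : Fin n → M := fun k : Fin n => Complex.I • pauliAt n k σx with hX
  set Y : Fin n → M := fun k : Fin n => Complex.I • pauliAt n k σy with hY
  set Z : Fin n → M := fun k : Fin n => Complex.I • pauliAt n k σz with hZ
  set S : Set M := Set.range X ∪ Set.range Y ∪ Set.range Z with hS
  set G : Set M := {Complex.I • ∑ k : Fin n, pauliAt n k σz} ∪ Set.range X ∪ Set.range Y with hG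
  have hXS : ∀ k, X k ∈ S := fun k => Set.mem_union_left _ (Set.mem_union_left _ ⟨k, rfl⟩)
  have hYS : ∀ k, Y k ∈ S := fun k => Set.mem_union_left _ (Set.mem_union_right _ ⟨k, rfl⟩)
  have hZS : ∀ k, Z k ∈ S := fun k => Set.mem_union_right _ ⟨k, rfl⟩
  have hbXY : ∀ k : Fin n, ⁅X k, Y k⁆ = (-2 : ℝ) • Z k :=
    fun k => bracket_pauli k σx σy σz hxy hyx
  have hbYZ : ∀ k : Fin n, ⁅Y k, Z k⁆ = (-2 : ℝ) • X k :=
    fun k => bracket_pauli k σy σz σx hyz hzy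
  have hbZX : ∀ k : Fin n, ⁅Z k, X k⁆ = (-2 : ℝ) • Y k :=
    fun k => bracket_pauli k σz σx σy hzx hxz
  -- brackets of generators of S stay in the span of S
  have hSS : ∀ u ∈ S, ∀ w ∈ S, ⁅u, w⁆ ∈ Submodule.span ℝ S := by
    have desc : ∀ u ∈ S, ∃ (k : Fin n) (α : Matrix (Fin 2) (Fin 2) ℂ),
        u = Complex.I • pauliAt n k α ∧ (α = σx ∨ α = σy ∨ α = σz) := by
      rintro u ((⟨k, rfl⟩ | ⟨k, rfl⟩) | ⟨k, rfl⟩)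
      · exact ⟨k, σx, rfl, Or.inl rfl⟩
      · exact ⟨k, σy, rfl, Or.inr (Or.inl rfl)⟩
      · exact ⟨k, σz, rfl, Or.inr (Or.inr rfl)⟩
    intro u hu w hw
    obtain ⟨k, α, rfl, hα⟩ := desc u hu
    obtain ⟨l, β, rfl, hβ⟩ := desc w hw
    by_cases hkl : k = l
    · subst hkl
      rcases hα with rfl | rfl | rfl <;> rcases hβ with rfl | rfl | rfl
      · rw [lie_self]; exact Submodule.zero_mem _
      · rw [hbXY k]; exact Submodule.smul_mem _ _ (Submodule.subset_span (hZS k))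
      · rw [← lie_skew, hbZX k]
        exact Submodule.neg_mem _ (Submodule.smul_mem _ _ (Submodule.subset_span (hYS k)))
      · rw [← lie_skew, hbXY k]
        exact Submodule.neg_mem _ (Submodule.smul_mem _ _ (Submodule.subset_span (hZS k)))
      · rw [lie_self]; exact Submodule.zero_mem _
      · rw [hbYZ k]; exact Submodule.smul_mem _ _ (Submodule.subset_span (hXS k))
      · rw [hbZX k]; exact Submodule.smul_mem _ _ (Submodule.subset_span (hYS k))
      · rw [← lie_skew, hbYZ k]
        exact Submodule.neg_mem _ (Submodule.smul_mem _ _ (Submodule.subset_span (hXS k)))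
      · rw [lie_self]; exact Submodule.zero_mem _
    · rw [bracket_pauli_ne k l hkl]; exact Submodule.zero_mem _
  have H : ∀ y ∈ Submodule.span ℝ S, ∀ x ∈ Submodule.span ℝ S, ⁅x, y⁆ ∈ Submodule.span ℝ S := by
    intro y hy
    induction hy using Submodule.span_induction with
    | mem w hw =>
      intro x hx
      induction hx using Submodule.span_induction with
      | mem u hu => exact hSS u hu w hw
      | zero => rw [zero_lie]; exact Submodule.zero_mem _
      | add a b _ _ ha hb => rw [add_lie]; exact Submodule.add_mem _ ha hb
      | smul r a _ ha => rw [smul_lie]; exact Submodule.smul_mem _ _ ha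
    | zero => intro x _; rw [lie_zero]; exact Submodule.zero_mem _
    | add a b _ _ ha hb => intro x hx; rw [lie_add]; exact Submodule.add_mem _ (ha x hx) (hb x hx)
    | smul r a _ ha => intro x hx; rw [lie_smul]; exact Submodule.smul_mem _ _ (ha x hx)
  set K : LieSubalgebra ℝ M :=
    { Submodule.span ℝ S with
      lie_mem' := fun {x y} hx hy => H y hy x hx } with hK
  have h2 : Submodule.span ℝ S ≤
      (LieSubalgebra.lieSpan ℝ M G).toSubmodule := by
    rw [Submodule.span_le]
    rintro u ((⟨k, rfl⟩ | ⟨k, rfl⟩) | ⟨k, rfl⟩)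
    · exact LieSubalgebra.subset_lieSpan (Set.mem_union_left _ (Set.mem_union_right _ ⟨k, rfl⟩))
    · exact LieSubalgebra.subset_lieSpan (Set.mem_union_right _ ⟨k, rfl⟩)
    · have hz : Z k = (-(1/2) : ℝ) • ⁅X k, Y k⁆ := by
        rw [hbXY k, smul_smul]; norm_num
      rw [SetLike.mem_coe, hz]
      exact Submodule.smul_mem _ _ (LieSubalgebra.lie_mem _
        (LieSubalgebra.subset_lieSpan
          (Set.mem_union_left _ (Set.mem_union_right _ ⟨k, rfl⟩)))
        (LieSubalgebra.subset_lieSpan (Set.mem_union_right _ ⟨k, rfl⟩)))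
  have h3 : LieSubalgebra.lieSpan ℝ M G ≤ K := by
    rw [LieSubalgebra.lieSpan_le]
    rintro u ((rfl | ⟨k, rfl⟩) | ⟨k, rfl⟩)
    · show Complex.I • ∑ k : Fin n, pauliAt n k σz ∈ Submodule.span ℝ S
      rw [Finset.smul_sum]
      exact Submodule.sum_mem _ fun k _ => Submodule.subset_span (hZS k)
    · exact Submodule.subset_span (hXS k)
    · exact Submodule.subset_span (hYS k)
  have part1 : (LieSubalgebra.lieSpan ℝ M G).toSubmodule = Submodule.span ℝ S :=
    le_antisymm (fun x hx => h3 hx) h2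
  refine ⟨part1, ?_⟩
  have hv : Set.range (Sum.elim (Sum.elim X Y) Z) = S := by
    rw [Set.Sum.elim_range, Set.Sum.elim_range, hS]
  have hfr : Module.finrank ℝ (Submodule.span ℝ S) = 3 * n := by
    rw [← hv, finrank_span_eq_card (pauli_indep n)]
    simp [Fintype.card_sum]
    ring
  rw [show Module.finrank ℝ (LieSubalgebra.lieSpan ℝ M G) =
      Module.finrank ℝ (LieSubalgebra.lieSpan ℝ M G).toSubmodule from rfl, part1]
  exact hfr
end
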